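/- Let K1 be the following set of 14 points of PG(2,31), given in homogeneous coordinates: (0,0,1), (0,1,0), (1,0,0), (1,1,1), (1,3,10), (1,5,11), (1,9,29), (1,12,19), (1,13,6), (1,14,3), (1,16,9), (1,20,26), (1,21,15), (1,22,16). Then K1 is a complete arc of PG(2,31) of size 14. -/

import Mathlib

open Projectivization

instance : Fact (Nat.Prime 31) := ⟨by norm_num⟩

/-- The point set of the projective plane `PG(2,31)`: the projectivization of the
3-dimensional vector space over the field with 31 elements. -/
abbrev PG31 : Type := Projectivization (ZMod 31) (Fin 3 → ZMod 31)

/-- An arc: a set of points no three of which are collinear, i.e. any three distinct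
points of the set have linearly independent representative vectors. -/
def IsArc31 (K : Set PG31) : Prop :=
  ∀ p ∈ K, ∀ q ∈ K, ∀ r ∈ K, p ≠ q → p ≠ r → q ≠ r →
    LinearIndependent (ZMod 31) ![p.rep, q.rep, r.rep]

/-- A complete arc: an arc not contained in a strictly larger arc. -/
def IsCompleteArc31 (K : Set PG31) : Prop :=
  IsArc31 K ∧ ∀ K' : Set PG31, IsArc31 K' → K ⊆ K' → K' = K

/-- The point of `PG(2,31)` with homogeneous coordinates `(a, b, c)`. -/
def pt31 (a b c : ZMod 31) (h : ![a, b, c] ≠ 0 := by decide) : PG31 :=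
  Projectivization.mk (ZMod 31) ![a, b, c] h

/-- The arc `K1` of `PG(2,31)`. -/
def K1 : Set PG31 :=
  {pt31 0 0 1, pt31 0 1 0, pt31 1 0 0, pt31 1 1 1, pt31 1 3 10, pt31 1 5 11,
   pt31 1 9 29, pt31 1 12 19, pt31 1 13 6, pt31 1 14 3, pt31 1 16 9,
   pt31 1 20 26, pt31 1 21 15, pt31 1 22 16}

namespace K1Aux

abbrev F := ZMod 31

def l : Fin 14 → Fin 3 → F :=
  ![![0,0,1], ![0,1,0], ![1,0,0], ![1,1,1], ![1,3,10], ![1,5,11],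
    ![1,9,29], ![1,12,19], ![1,13,6], ![1,14,3], ![1,16,9],
    ![1,20,26], ![1,21,15], ![1,22,16]]

lemma l_ne_zero : ∀ i, l i ≠ 0 := by decide

def P (i : Fin 14) : PG31 := Projectivization.mk (ZMod 31) (l i) (l_ne_zero i)

def det3 (v w u : Fin 3 → F) : F :=
  v 0 * (w 1 * u 2 - w 2 * u 1) - v 1 * (w 0 * u 2 - w 2 * u 0) + v 2 * (w 0 * u 1 - w 1 * u 0)

def para (v w : Fin 3 → F) : Prop :=
  v 0 * w 1 = v 1 * w 0 ∧ v 0 * w 2 = v 2 * w 0 ∧ v 1 * w 2 = v 2 * w 1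

instance (v w : Fin 3 → F) : Decidable (para v w) := by unfold para; infer_instance

def cov (v : Fin 3 → F) : Prop :=
  ∃ i j : Fin 14, i ≠ j ∧ det3 v (l i) (l j) = 0

instance (v : Fin 3 → F) : Decidable (cov v) := by unfold cov; infer_instance

theorem factA : ∀ i j k : Fin 14, i ≠ j → i ≠ k → j ≠ k → det3 (l i) (l j) (l k) ≠ 0 := by
  decide

theorem factB : ∀ i j : Fin 14, i ≠ j → ¬ para (l i) (l j) := by decide

theorem factC1 : cov ![0,0,1] := by decide
theorem factC2 : ∀ c : F, cov ![0,1,c] := by decide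
set_option maxHeartbeats 4000000 in
set_option maxRecDepth 100000 in
theorem factC3 : ∀ b c : F, cov ![1,b,c] := by decide

lemma det3_eq (v w u : Fin 3 → F) : (Matrix.of ![v, w, u]).det = det3 v w u := by
  rw [Matrix.det_fin_three]
  simp [det3]
  ring

lemma li_iff (v w u : Fin 3 → F) :
    LinearIndependent F ![v, w, u] ↔ det3 v w u ≠ 0 := by
  have h : LinearIndependent F ![v, w, u] ↔ IsUnit (Matrix.of ![v, w, u]) :=
    Matrix.linearIndependent_rows_iff_isUnit
  rw [h, Matrix.isUnit_iff_isUnit_det, isUnit_iff_ne_zero, det3_eq]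

lemma det3_smul (a b c : F) (v w u : Fin 3 → F) :
    det3 (a • v) (b • w) (c • u) = a * b * c * det3 v w u := by
  simp only [det3, Pi.smul_apply, smul_eq_mul]
  ring

lemma rep_li_iff (v w u : Fin 3 → F) (hv : v ≠ 0) (hw : w ≠ 0) (hu : u ≠ 0) :
    LinearIndependent F
      ![(Projectivization.mk F v hv).rep, (Projectivization.mk F w hw).rep,
        (Projectivization.mk F u hu).rep] ↔ det3 v w u ≠ 0 := by
  obtain ⟨a, ha⟩ := Projectivization.exists_smul_eq_mk_rep F v hv
  obtain ⟨b, hb⟩ := Projectivization.exists_smul_eq_mk_rep F w hw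
  obtain ⟨c, hc⟩ := Projectivization.exists_smul_eq_mk_rep F u hu
  rw [← ha, ← hb, ← hc, Units.smul_def, Units.smul_def, Units.smul_def, li_iff, det3_smul]
  simp [mul_ne_zero_iff, a.ne_zero, b.ne_zero, c.ne_zero]

lemma smul_eq_of (a : F) (w v : Fin 3 → F) (h0 : a * w 0 = v 0) (h1 : a * w 1 = v 1)
    (h2 : a * w 2 = v 2) : a • w = v := by
  funext i
  fin_cases i
  · exact h0
  · exact h1
  · exact h2

lemma para_of_mk_eq {v w : Fin 3 → F} (hv : v ≠ 0) (hw : w ≠ 0)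
    (h : Projectivization.mk F v hv = Projectivization.mk F w hw) : para v w := by
  rw [Projectivization.mk_eq_mk_iff'] at h
  obtain ⟨a, ha⟩ := h
  have e0 : v 0 = a * w 0 := by rw [← ha]; rfl
  have e1 : v 1 = a * w 1 := by rw [← ha]; rfl
  have e2 : v 2 = a * w 2 := by rw [← ha]; rfl
  refine ⟨?_, ?_, ?_⟩ <;> (simp only [e0, e1, e2]; ring)

lemma mk_eq_of_para {v w : Fin 3 → F} (hv : v ≠ 0) (hw : w ≠ 0) (h : para v w) :
    Projectivization.mk F v hv = Projectivization.mk F w hw := by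
  obtain ⟨h1, h2, h3⟩ := h
  rw [Projectivization.mk_eq_mk_iff']
  by_cases h0' : w 0 ≠ 0
  · refine ⟨v 0 / w 0, smul_eq_of _ _ _ ?_ ?_ ?_⟩ <;> field_simp
    · linear_combination h1
    · linear_combination h2
  · push_neg at h0'
    by_cases h1' : w 1 ≠ 0
    · have hv0 : v 0 = 0 := by
        have := h1; rw [h0', mul_zero] at this
        rcases mul_eq_zero.1 this with h | h
        · exact h
        · exact absurd h h1'
      refine ⟨v 1 / w 1, smul_eq_of _ _ _ ?_ ?_ ?_⟩
      · rw [h0', hv0, mul_zero]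
      · field_simp
      · field_simp; linear_combination h3
    · push_neg at h1'
      have h2' : w 2 ≠ 0 := by
        intro h2'
        exact hw (funext fun i => by fin_cases i <;> simp [h0', h1', h2'])
      have hv0 : v 0 = 0 := by
        have := h2; rw [h0', mul_zero] at this
        rcases mul_eq_zero.1 this with h | h
        · exact h
        · exact absurd h h2'
      have hv1 : v 1 = 0 := by
        have := h3; rw [h1', mul_zero] at this
        rcases mul_eq_zero.1 this with h | h
        · exact h
        · exact absurd h h2'
      refine ⟨v 2 / w 2, smul_eq_of _ _ _ ?_ ?_ ?_⟩
      · rw [h0', hv0, mul_zero]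
      · rw [h1', hv1, mul_zero]
      · field_simp

lemma P_injective : Function.Injective P := by
  intro i j h
  by_contra hij
  exact factB i j hij (para_of_mk_eq (l_ne_zero i) (l_ne_zero j) h)

lemma K1_eq_range : K1 = Set.range P := by
  ext x
  simp only [K1, Set.mem_insert_iff, Set.mem_singleton_iff, Set.mem_range]
  constructor
  · rintro (rfl | rfl | rfl | rfl | rfl | rfl | rfl | rfl | rfl | rfl | rfl | rfl | rfl | rfl)
    exacts [⟨0, rfl⟩, ⟨1, rfl⟩, ⟨2, rfl⟩, ⟨3, rfl⟩, ⟨4, rfl⟩, ⟨5, rfl⟩, ⟨6, rfl⟩,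
      ⟨7, rfl⟩, ⟨8, rfl⟩, ⟨9, rfl⟩, ⟨10, rfl⟩, ⟨11, rfl⟩, ⟨12, rfl⟩, ⟨13, rfl⟩]
  · rintro ⟨i, rfl⟩
    fin_cases i
    exacts [Or.inl rfl, Or.inr (Or.inl rfl), Or.inr (Or.inr (Or.inl rfl)),
      Or.inr (Or.inr (Or.inr (Or.inl rfl))),
      Or.inr (Or.inr (Or.inr (Or.inr (Or.inl rfl)))),
      Or.inr (Or.inr (Or.inr (Or.inr (Or.inr (Or.inl rfl))))),
      Or.inr (Or.inr (Or.inr (Or.inr (Or.inr (Or.inr (Or.inl rfl)))))),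
      Or.inr (Or.inr (Or.inr (Or.inr (Or.inr (Or.inr (Or.inr (Or.inl rfl))))))),
      Or.inr (Or.inr (Or.inr (Or.inr (Or.inr (Or.inr (Or.inr (Or.inr (Or.inl rfl)))))))),
      Or.inr (Or.inr (Or.inr (Or.inr (Or.inr (Or.inr (Or.inr (Or.inr (Or.inr (Or.inl rfl))))))))),
      Or.inr (Or.inr (Or.inr (Or.inr (Or.inr (Or.inr (Or.inr (Or.inr (Or.inr (Or.inr (Or.inl rfl)))))))))),
      Or.inr (Or.inr (Or.inr (Or.inr (Or.inr (Or.inr (Or.inr (Or.inr (Or.inr (Or.inr (Or.inr (Or.inl rfl))))))))))),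
      Or.inr (Or.inr (Or.inr (Or.inr (Or.inr (Or.inr (Or.inr (Or.inr (Or.inr (Or.inr (Or.inr (Or.inr (Or.inl rfl)))))))))))),
      Or.inr (Or.inr (Or.inr (Or.inr (Or.inr (Or.inr (Or.inr (Or.inr (Or.inr (Or.inr (Or.inr (Or.inr (Or.inr rfl))))))))))))]

lemma vec_ne_zero (v : Fin 3 → F) (i : Fin 3) (h : v i ≠ 0) : v ≠ 0 := fun hv => h (by rw [hv]; rfl)

lemma exists_canon (p : PG31) :
    ∃ (v : Fin 3 → F) (hv : v ≠ 0), p = Projectivization.mk F v hv ∧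
      ((∃ b c, v = ![1, b, c]) ∨ (∃ c, v = ![0, 1, c]) ∨ v = ![0, 0, 1]) := by
  have hu0 : p.rep ≠ 0 := p.rep_nonzero
  set u := p.rep with hu
  have hp : p = Projectivization.mk F u hu0 := (Projectivization.mk_rep p).symm
  by_cases h0 : u 0 ≠ 0
  · refine ⟨![1, u 1 / u 0, u 2 / u 0],
      vec_ne_zero _ 0 (by norm_num), ?_, Or.inl ⟨_, _, rfl⟩⟩
    rw [hp, Projectivization.mk_eq_mk_iff']
    refine ⟨u 0, smul_eq_of _ _ _ ?_ ?_ ?_⟩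
    · show u 0 * 1 = u 0; ring
    · show u 0 * (u 1 / u 0) = u 1; field_simp
    · show u 0 * (u 2 / u 0) = u 2; field_simp
  · push_neg at h0
    by_cases h1 : u 1 ≠ 0
    · refine ⟨![0, 1, u 2 / u 1], vec_ne_zero _ 1 (by norm_num), ?_, Or.inr (Or.inl ⟨_, rfl⟩)⟩
      rw [hp, Projectivization.mk_eq_mk_iff']
      refine ⟨u 1, smul_eq_of _ _ _ ?_ ?_ ?_⟩
      · show u 1 * 0 = u 0; rw [h0, mul_zero]
      · show u 1 * 1 = u 1; ring
      · show u 1 * (u 2 / u 1) = u 2; field_simp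
    · push_neg at h1
      have h2 : u 2 ≠ 0 := by
        intro h2
        exact hu0 (funext fun i => by fin_cases i <;> simp [h0, h1, h2])
      refine ⟨![0, 0, 1], vec_ne_zero _ 2 (by decide), ?_, Or.inr (Or.inr rfl)⟩
      rw [hp, Projectivization.mk_eq_mk_iff']
      refine ⟨u 2, smul_eq_of _ _ _ ?_ ?_ ?_⟩
      · show u 2 * 0 = u 0; rw [h0, mul_zero]
      · show u 2 * 0 = u 1; rw [h1, mul_zero]
      · show u 2 * 1 = u 2; ring

end K1Aux

/-- `K1` is a complete arc of `PG(2,31)` of size 14. -/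
theorem K1_complete_arc_card_14 : IsCompleteArc31 K1 ∧ K1.ncard = 14 := by
  have hmem : ∀ i, K1Aux.P i ∈ K1 := by
    intro i
    rw [K1Aux.K1_eq_range]
    exact ⟨i, rfl⟩
  have hmem' : ∀ x ∈ K1, ∃ i, x = K1Aux.P i := by
    rw [K1Aux.K1_eq_range]
    rintro x ⟨i, rfl⟩
    exact ⟨i, rfl⟩
  have harc : IsArc31 K1 := by
    intro p hp q hq r hr hpq hpr hqr
    obtain ⟨i, rfl⟩ := hmem' p hp
    obtain ⟨j, rfl⟩ := hmem' q hq
    obtain ⟨k, rfl⟩ := hmem' r hr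
    have hij : i ≠ j := fun h => hpq (by rw [h])
    have hik : i ≠ k := fun h => hpr (by rw [h])
    have hjk : j ≠ k := fun h => hqr (by rw [h])
    exact (K1Aux.rep_li_iff (K1Aux.l i) (K1Aux.l j) (K1Aux.l k) (K1Aux.l_ne_zero i)
      (K1Aux.l_ne_zero j) (K1Aux.l_ne_zero k)).2 (K1Aux.factA i j k hij hik hjk)
  refine ⟨⟨harc, ?_⟩, ?_⟩
  · intro K' hK' hsub
    refine Set.Subset.antisymm ?_ hsub
    intro p hp
    obtain ⟨v, hv, rfl, hshape⟩ := K1Aux.exists_canon p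
    have hcov : K1Aux.cov v := by
      rcases hshape with ⟨b, c, rfl⟩ | ⟨c, rfl⟩ | rfl
      · exact K1Aux.factC3 b c
      · exact K1Aux.factC2 c
      · exact K1Aux.factC1
    obtain ⟨i, j, hij, hdet⟩ := hcov
    by_cases hpi : K1Aux.para v (K1Aux.l i)
    · rw [show Projectivization.mk (ZMod 31) v hv = K1Aux.P i from
        K1Aux.mk_eq_of_para hv (K1Aux.l_ne_zero i) hpi]
      exact hmem i
    by_cases hpj : K1Aux.para v (K1Aux.l j)
    · rw [show Projectivization.mk (ZMod 31) v hv = K1Aux.P j from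
        K1Aux.mk_eq_of_para hv (K1Aux.l_ne_zero j) hpj]
      exact hmem j
    · exfalso
      have h1 : K1Aux.P i ∈ K' := hsub (hmem i)
      have h2 : K1Aux.P j ∈ K' := hsub (hmem j)
      have hne1 : Projectivization.mk (ZMod 31) v hv ≠ K1Aux.P i := fun h =>
        hpi (K1Aux.para_of_mk_eq hv (K1Aux.l_ne_zero i) h)
      have hne2 : Projectivization.mk (ZMod 31) v hv ≠ K1Aux.P j := fun h =>
        hpj (K1Aux.para_of_mk_eq hv (K1Aux.l_ne_zero j) h)
      have hne3 : K1Aux.P i ≠ K1Aux.P j := fun h =>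
        K1Aux.factB i j hij (K1Aux.para_of_mk_eq (K1Aux.l_ne_zero i) (K1Aux.l_ne_zero j) h)
      have hli := hK' _ hp _ h1 _ h2 hne1 hne2 hne3
      exact (K1Aux.rep_li_iff v (K1Aux.l i) (K1Aux.l j) hv (K1Aux.l_ne_zero i)
        (K1Aux.l_ne_zero j)).1 hli hdet
  · rw [K1Aux.K1_eq_range, ← Set.image_univ,
      Set.ncard_image_of_injective _ K1Aux.P_injective, Set.ncard_univ]
    simp
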